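/- Under Assumption 1 (u symmetric, continuous, nondecreasing, submodular, u(∅)=0, u(0,y_S)=u(y_S)), the generalized reservation value is weakly decreasing in the set of uncovered prizes: for any tuple x, any additional prize value x_j, cost c_k ≥ 0 and prize distribution F_k, x_k*(x) ≥ x_k*(x, x_j), where x_k*(x) = min{y ≥ 0 : u(x, y) ≥ -c_k + ∫ u(x, y, t) dF_k(t)}. -/

import Mathlib

open scoped NNReal

/-- `u` is symmetric: invariant under permutations of its arguments. -/
def IsSymmU (u : List ℝ≥0 → ℝ) : Prop := ∀ l l' : List ℝ≥0, l.Perm l' → u l = u l'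

/-- `u` is nondecreasing in each argument. -/
def IsMonoU (u : List ℝ≥0 → ℝ) : Prop :=
  ∀ l l' : List ℝ≥0, List.Forall₂ (· ≤ ·) l l' → u l ≤ u l'

/-- `u` is submodular: `u(x∧y)+u(x∨y) ≤ u(x)+u(y)` for equal-length tuples. -/
def IsSubmodU (u : List ℝ≥0 → ℝ) : Prop := ∀ l l' : List ℝ≥0, l.length = l'.length →
  u (List.zipWith min l l') + u (List.zipWith max l l') ≤ u l + u l'

/-- `u` is continuous on tuples of each fixed length. -/
def IsContU (u : List ℝ≥0 → ℝ) : Prop :=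
  ∀ n : ℕ, Continuous (fun v : Fin n → ℝ≥0 => u (List.ofFn v))

/-- Assumption 1: `u(∅)=0`, prepending a zero leaves `u` unchanged, `u` nonnegative,
continuous, symmetric, nondecreasing and submodular. -/
def Assumption1 (u : List ℝ≥0 → ℝ) : Prop :=
  u [] = 0 ∧ (∀ l, u (0 :: l) = u l) ∧ (∀ l, 0 ≤ u l) ∧
    IsContU u ∧ IsSymmU u ∧ IsMonoU u ∧ IsSubmodU u

/-- Assumption 2: the benefit of raising an argument from `0` to `xi` does not
depend on the values of other arguments exceeding `xi`. -/
def Assumption2 (u : List ℝ≥0 → ℝ) : Prop :=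
  ∀ (l : List ℝ≥0) (xi xlo xhi : ℝ≥0), xi ≤ xlo → xlo < xhi →
    u (l ++ [xhi, xi]) - u (l ++ [xhi, 0]) = u (l ++ [xlo, xi]) - u (l ++ [xlo, 0])

open MeasureTheory
open scoped ENNReal

/-- The set of prize values `y` at which stopping is weakly better than paying
`c` to open the box with prize distribution `F` and then stopping. -/
noncomputable def stopSet (u : List ℝ≥0 → ℝ) (F : Measure ℝ≥0) (c : ℝ)
    (x : List ℝ≥0) : Set ℝ≥0 :=
  {y : ℝ≥0 | -c + ∫ t, u (x ++ [y, t]) ∂F ≤ u (x ++ [y])}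

/-- Lemma 3: under Assumption 1, the generalized reservation value
`x_k*(x) = min{y ≥ 0 : u(x,y) ≥ -c_k + ∫ u(x,y,t) dF_k(t)}` (with value `+∞`
when no such `y` exists) weakly decreases when an additional prize `x_j` has
been uncovered: `x_k*(x, x_j) ≤ x_k*(x)`. -/
theorem stmt_15 (u : List ℝ≥0 → ℝ) (hA1 : Assumption1 u)
    (F : Measure ℝ≥0) [IsProbabilityMeasure F]
    (hInt : ∀ l : List ℝ≥0, Integrable (fun t => u (l ++ [t])) F)
    (c : ℝ) (hc : 0 ≤ c) (x : List ℝ≥0) (xj : ℝ≥0) :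
    (⨅ y ∈ stopSet u F c (x ++ [xj]), (y : ℝ≥0∞)) ≤
      ⨅ y ∈ stopSet u F c x, (y : ℝ≥0∞) := by
  obtain ⟨h0, hz, hnn, hcont, hsym, hmono, hsub⟩ := hA1
  -- u ignores a zero anywhere in the tuple
  have uzero : ∀ l₁ l₂ : List ℝ≥0, u (l₁ ++ 0 :: l₂) = u (l₁ ++ l₂) := by
    intro l₁ l₂
    rw [hsym _ _ (List.perm_middle), hz]
  have hsubset : stopSet u F c x ⊆ stopSet u F c (x ++ [xj]) := by
    intro y hy
    simp only [stopSet, Set.mem_setOf_eq] at hy ⊢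
    have key : ∀ t : ℝ≥0,
        u (x ++ [xj] ++ [y, t]) ≤ u (x ++ [y, t]) + (u (x ++ [xj] ++ [y]) - u (x ++ [y])) := by
      intro t
      have hlen : (x ++ [(0:ℝ≥0), y, t]).length = (x ++ [xj, y, 0]).length := by simp
      have h := hsub (x ++ [0, y, t]) (x ++ [xj, y, 0]) hlen
      have hmin : List.zipWith min (x ++ [(0:ℝ≥0), y, t]) (x ++ [xj, y, 0])
          = x ++ [0, y, 0] := by
        rw [List.zipWith_append rfl]
        congr 1
        · induction x with
          | nil => rfl
          | cons a l ih => simp [ih]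
        · simp
      have hmax : List.zipWith max (x ++ [(0:ℝ≥0), y, t]) (x ++ [xj, y, 0])
          = x ++ [xj, y, t] := by
        rw [List.zipWith_append rfl]
        congr 1
        · induction x with
          | nil => rfl
          | cons a l ih => simp [ih]
        · simp
      rw [hmin, hmax] at h
      have e1 : u (x ++ [(0:ℝ≥0), y, t]) = u (x ++ [y, t]) := uzero x [y, t]
      have e2 : u (x ++ [xj, y, (0:ℝ≥0)]) = u (x ++ [xj] ++ [y]) := by
        have : x ++ [xj, y, (0:ℝ≥0)] = (x ++ [xj, y]) ++ 0 :: [] := by simp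
        rw [this, uzero]; simp
      have e3 : u (x ++ [(0:ℝ≥0), y, (0:ℝ≥0)]) = u (x ++ [y]) := by
        rw [uzero x [y, 0]]
        have : x ++ [y, (0:ℝ≥0)] = (x ++ [y]) ++ 0 :: [] := by simp
        rw [this, uzero]; simp
      have e4 : u (x ++ [xj, y, t]) = u (x ++ [xj] ++ [y, t]) := by simp
      rw [e1, e2, e3, e4] at h
      linarith
    have hi1 : Integrable (fun t => u (x ++ [xj] ++ [y, t])) F := by
      have : (fun t => u (x ++ [xj] ++ [y, t]))
          = fun t => u ((x ++ [xj] ++ [y]) ++ [t]) := by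
        funext t; congr 1; simp
      rw [this]; exact hInt _
    have hi2 : Integrable (fun t => u (x ++ [y, t])) F := by
      have : (fun t => u (x ++ [y, t])) = fun t => u ((x ++ [y]) ++ [t]) := by
        funext t; congr 1; simp
      rw [this]; exact hInt _
    have hint : ∫ t, u (x ++ [xj] ++ [y, t]) ∂F
        ≤ ∫ t, (u (x ++ [y, t]) + (u (x ++ [xj] ++ [y]) - u (x ++ [y]))) ∂F :=
      integral_mono hi1 (hi2.add (integrable_const _)) key
    rw [integral_add hi2 (integrable_const _), integral_const,
      probReal_univ, one_smul] at hint
    linarith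
  exact le_iInf₂ fun y hy => iInf₂_le y (hsubset hy)
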